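/- Let R > 0 and let Π be a measurable real-valued function on D = {(x,y) ∈ ℝ² : 0 ≤ x ≤ y}. Assume there exist constants ε₇ > −1, ε₈ > 0 and c > 0 such that |Π(x,y)| ≤ c · x^{ε₇} · y^{−ε₈} for all 0 < x < R and y > R. Then ∫∫_{{(x,y) : 0 ≤ x < R ≤ y}} |φ^{(R,T)}(x) − φ^{(R,T)}(y)|² · Π(x,y)/(y−x) dx dy → 0 as T → ∞. -/

import Mathlib

open MeasureTheory Filter

/-- The cutoff function `φ^{(R,T)}`: equal to `1` on `(-∞, R]`, to
`1 - log(x-R+1)/log(T-R+1)` on `[R, T]`, and to `0` on `[T, ∞)`. -/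
noncomputable def phi (R T x : ℝ) : ℝ :=
  if x ≤ R then 1
  else if x ≤ T then 1 - Real.log (x - R + 1) / Real.log (T - R + 1)
  else 0

lemma phi_measurable (R T : ℝ) : Measurable (phi R T) := by
  unfold phi
  apply Measurable.ite (measurableSet_le measurable_id measurable_const) measurable_const
  apply Measurable.ite (measurableSet_le measurable_id measurable_const) _ measurable_const
  exact measurable_const.sub
    ((Real.measurable_log.comp ((measurable_id.sub measurable_const).add
      measurable_const)).div measurable_const)

theorem stmt_4 (R : ℝ) (hR : 0 < R) (Pi : ℝ → ℝ → ℝ)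
    (hmeas : Measurable fun p : ℝ × ℝ => Pi p.1 p.2)
    (ε₇ ε₈ c : ℝ) (hε₇ : -1 < ε₇) (hε₈ : 0 < ε₈) (hc : 0 < c)
    (hbound : ∀ x y : ℝ, 0 < x → x < R → R < y →
      |Pi x y| ≤ c * x ^ ε₇ * y ^ (-ε₈)) :
    Tendsto (fun T : ℝ =>
        ∫ p in {p : ℝ × ℝ | 0 ≤ p.1 ∧ p.1 < R ∧ R ≤ p.2},
          |phi R T p.1 - phi R T p.2| ^ 2 * (Pi p.1 p.2 / (p.2 - p.1)))
      atTop (nhds 0) := by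
  have hSprod : {p : ℝ × ℝ | 0 ≤ p.1 ∧ p.1 < R ∧ R ≤ p.2}
      = Set.Ico 0 R ×ˢ Set.Ici R := by
    ext p; simp [Set.mem_prod, and_assoc]
  rw [hSprod]
  set μ : Measure (ℝ × ℝ) := volume.restrict (Set.Ico 0 R ×ˢ Set.Ici R) with hμdef
  have hμ : μ = (volume.restrict (Set.Ico 0 R)).prod (volume.restrict (Set.Ici R)) := by
    rw [hμdef, MeasureTheory.Measure.volume_eq_prod, Measure.prod_restrict]
  -- a.e. facts
  have hz1 : (volume : Measure (ℝ × ℝ)) {p | p.1 = 0} = 0 := by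
    have h : {p : ℝ × ℝ | p.1 = 0} = ({0} : Set ℝ) ×ˢ (Set.univ : Set ℝ) := by
      ext ⟨a, b⟩; simp [Set.mem_prod, eq_comm]
    rw [h, MeasureTheory.Measure.volume_eq_prod, Measure.prod_prod,
      Real.volume_singleton, zero_mul]
  have hz2 : (volume : Measure (ℝ × ℝ)) {p | p.2 = R} = 0 := by
    have h : {p : ℝ × ℝ | p.2 = R} = (Set.univ : Set ℝ) ×ˢ ({R} : Set ℝ) := by
      ext ⟨a, b⟩; simp [Set.mem_prod, eq_comm]
    rw [h, MeasureTheory.Measure.volume_eq_prod, Measure.prod_prod,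
      Real.volume_singleton, mul_zero]
  have h3 : ∀ᵐ p ∂(volume : Measure (ℝ × ℝ)), ¬(p.1 = 0 ∨ p.2 = R) := by
    have hu : (volume : Measure (ℝ × ℝ)) {p | p.1 = 0 ∨ p.2 = R} = 0 := by
      rw [Set.setOf_or]; exact measure_union_null hz1 hz2
    rw [ae_iff]
    simpa only [not_not] using hu
  have hae : ∀ᵐ p ∂μ, 0 < p.1 ∧ p.1 < R ∧ R < p.2 := by
    have hmem : ∀ᵐ p ∂μ, p ∈ Set.Ico 0 R ×ˢ Set.Ici R :=
      ae_restrict_mem (measurableSet_Ico.prod measurableSet_Ici)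
    filter_upwards [hmem, ae_restrict_of_ae h3] with p hp hne
    push_neg at hne
    obtain ⟨⟨hx0, hxR⟩, hy⟩ := hp
    exact ⟨lt_of_le_of_ne hx0 (Ne.symm hne.1), hxR, lt_of_le_of_ne hy (Ne.symm hne.2)⟩
  -- the bound
  set B : ℝ × ℝ → ℝ := fun p => (c * (R + 1) * p.1 ^ ε₇) * p.2 ^ (-ε₈ - 1) with hBdef
  have hBint : Integrable B μ := by
    rw [hμ]
    have hf : Integrable (fun x : ℝ => c * (R + 1) * x ^ ε₇)
        (volume.restrict (Set.Ico 0 R)) := by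
      apply Integrable.const_mul
      have h1 : IntervalIntegrable (fun x : ℝ => x ^ ε₇) volume 0 R :=
        intervalIntegral.intervalIntegrable_rpow' hε₇
      have h2 : IntegrableOn (fun x : ℝ => x ^ ε₇) (Set.Ioc 0 R) :=
        (intervalIntegrable_iff_integrableOn_Ioc_of_le hR.le).1 h1
      exact h2.congr_set_ae (Ioo_ae_eq_Ico.symm.trans Ioo_ae_eq_Ioc)
    have hg : Integrable (fun y : ℝ => y ^ (-ε₈ - 1))
        (volume.restrict (Set.Ici R)) := by
      have h1 : IntegrableOn (fun y : ℝ => y ^ (-ε₈ - 1)) (Set.Ioi R) :=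
        (integrableOn_Ioi_rpow_iff hR).2 (by linarith)
      exact h1.congr_set_ae Ioi_ae_eq_Ici.symm
    exact hf.mul_prod hg
  -- measurability
  have hFmeas : ∀ T : ℝ, AEStronglyMeasurable
      (fun p : ℝ × ℝ => |phi R T p.1 - phi R T p.2| ^ 2 * (Pi p.1 p.2 / (p.2 - p.1))) μ := by
    intro T
    exact (((((phi_measurable R T).comp measurable_fst).sub
      ((phi_measurable R T).comp measurable_snd)).abs.pow measurable_const).mul
      (hmeas.div (measurable_snd.sub measurable_fst))).aestronglyMeasurable
  -- bound
  have h_bound : ∀ᶠ T in atTop, ∀ᵐ p ∂μ,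
      ‖|phi R T p.1 - phi R T p.2| ^ 2 * (Pi p.1 p.2 / (p.2 - p.1))‖ ≤ B p := by
    filter_upwards [eventually_ge_atTop (R + 2)] with T hT
    filter_upwards [hae] with p hp
    obtain ⟨hx0, hxR, hRy⟩ := hp
    set x := p.1
    set y := p.2
    have hy0 : 0 < y := hR.trans hRy
    have hyx : 0 < y - x := by linarith
    have hL1 : (1 : ℝ) ≤ Real.log (T - R + 1) := by
      rw [Real.le_log_iff_exp_le (by linarith)]
      have := Real.exp_one_lt_d9
      linarith
    have hl0 : 0 ≤ Real.log (y - R + 1) := Real.log_nonneg (by linarith)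
    have hlle : Real.log (y - R + 1) ≤ y - R := by
      have := Real.log_le_sub_one_of_pos (show (0:ℝ) < y - R + 1 by linarith)
      linarith
    have hphix : phi R T x = 1 := if_pos hxR.le
    have hd : |phi R T x - phi R T y| ≤ min 1 (y - R) := by
      rw [hphix]
      unfold phi
      rw [if_neg (not_le.2 hRy)]
      by_cases hyT : y ≤ T
      · rw [if_pos hyT]
        have hll : Real.log (y - R + 1) ≤ Real.log (T - R + 1) :=
          Real.log_le_log (by linarith) (by linarith)
        have hq0 : 0 ≤ Real.log (y - R + 1) / Real.log (T - R + 1) :=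
          div_nonneg hl0 (by linarith)
        have hq1 : Real.log (y - R + 1) / Real.log (T - R + 1) ≤ 1 :=
          (div_le_one (by linarith)).2 hll
        have hqy : Real.log (y - R + 1) / Real.log (T - R + 1) ≤ y - R :=
          le_trans (div_le_self hl0 hL1) hlle
        rw [sub_sub_cancel, abs_of_nonneg hq0]
        exact le_min hq1 hqy
      · rw [if_neg hyT]
        push_neg at hyT
        rw [sub_zero, abs_one]
        exact le_min le_rfl (by linarith)
    have hm0 : 0 ≤ min 1 (y - R) := le_min zero_le_one (by linarith)
    have hd2 : |phi R T x - phi R T y| ^ 2 ≤ min 1 (y - R) := by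
      calc |phi R T x - phi R T y| ^ 2 ≤ (min 1 (y - R)) ^ 2 :=
            pow_le_pow_left₀ (abs_nonneg _) hd 2
        _ ≤ min 1 (y - R) * 1 := by
            rw [sq]; exact mul_le_mul_of_nonneg_left (min_le_left _ _) hm0
        _ = min 1 (y - R) := mul_one _
    have hkey : min 1 (y - R) / (y - x) ≤ (R + 1) / y := by
      rw [div_le_div_iff₀ hyx hy0]
      rcases le_total (y - R) 1 with h | h
      · rw [min_eq_right h]
        nlinarith [mul_nonneg (show (0:ℝ) ≤ y - R by linarith)
            (show (0:ℝ) ≤ R + 1 - y by linarith),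
          mul_nonneg (show (0:ℝ) ≤ R - x by linarith) (show (0:ℝ) ≤ R + 1 by linarith)]
      · rw [min_eq_left h]
        nlinarith [mul_nonneg hR.le (show (0:ℝ) ≤ y - R - 1 by linarith),
          mul_nonneg (show (0:ℝ) ≤ R + 1 by linarith) (show (0:ℝ) ≤ R - x by linarith)]
    have hPi := hbound x y hx0 hxR hRy
    have hys : y ^ (-ε₈ - 1) = y ^ (-ε₈) / y := by
      rw [show -ε₈ - 1 = -ε₈ - (1:ℝ) from rfl, Real.rpow_sub hy0, Real.rpow_one]
    have hrw : ‖|phi R T x - phi R T y| ^ 2 * (Pi x y / (y - x))‖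
        = |phi R T x - phi R T y| ^ 2 * (|Pi x y| / (y - x)) := by
      rw [Real.norm_eq_abs, abs_mul, abs_of_nonneg (pow_nonneg (abs_nonneg _) 2),
        abs_div, abs_of_pos hyx]
    rw [hrw]
    calc |phi R T x - phi R T y| ^ 2 * (|Pi x y| / (y - x))
        ≤ min 1 (y - R) * (|Pi x y| / (y - x)) :=
          mul_le_mul_of_nonneg_right hd2 (div_nonneg (abs_nonneg _) hyx.le)
      _ = (min 1 (y - R) / (y - x)) * |Pi x y| := by ring
      _ ≤ ((R + 1) / y) * (c * x ^ ε₇ * y ^ (-ε₈)) := by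
          apply mul_le_mul hkey hPi (abs_nonneg _)
          positivity
      _ = B p := by
          show _ = c * (R + 1) * x ^ ε₇ * y ^ (-ε₈ - 1)
          rw [hys]
          simp only [div_eq_mul_inv]
          ring
  -- pointwise limit
  have h_lim : ∀ᵐ p ∂μ, Tendsto
      (fun T : ℝ => |phi R T p.1 - phi R T p.2| ^ 2 * (Pi p.1 p.2 / (p.2 - p.1)))
      atTop (nhds 0) := by
    filter_upwards [hae] with p hp
    obtain ⟨hx0, hxR, hRy⟩ := hp
    set x := p.1
    set y := p.2
    set C : ℝ := (Real.log (y - R + 1)) ^ 2 * |Pi x y / (y - x)| with hCdef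
    apply squeeze_zero_norm' (a := fun T : ℝ => C * ((Real.log (T - R + 1))⁻¹) ^ 2)
    · filter_upwards [eventually_ge_atTop y, eventually_ge_atTop (R + 1)] with T hTy hTR
      have hL0 : 0 < Real.log (T - R + 1) := Real.log_pos (by linarith)
      have hphix : phi R T x = 1 := if_pos hxR.le
      have hphiy : phi R T y = 1 - Real.log (y - R + 1) / Real.log (T - R + 1) := by
        unfold phi
        rw [if_neg (not_le.2 hRy), if_pos hTy]
      rw [hphix, hphiy, sub_sub_cancel, Real.norm_eq_abs, abs_mul,
        abs_of_nonneg (pow_nonneg (abs_nonneg _) 2), sq_abs]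
      apply le_of_eq
      rw [hCdef]
      field_simp
    · have h1 : Tendsto (fun T : ℝ => T - R + 1) atTop atTop := by
        have := tendsto_atTop_add_const_right atTop (1 - R) (tendsto_id (α := ℝ))
        apply this.congr
        intro T; simp; ring
      have hL : Tendsto (fun T : ℝ => Real.log (T - R + 1)) atTop atTop :=
        Real.tendsto_log_atTop.comp h1
      have hinv : Tendsto (fun T : ℝ => (Real.log (T - R + 1))⁻¹) atTop (nhds 0) :=
        hL.inv_tendsto_atTop
      have := (hinv.pow 2).const_mul C
      simpa using this
  have H := tendsto_integral_filter_of_dominated_convergence (μ := μ)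
    (f := fun _ : ℝ × ℝ => (0 : ℝ)) B (Eventually.of_forall hFmeas) h_bound hBint h_lim
  simpa using H
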